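/- Let 𝔤 be a finite-dimensional complex Lie algebra with a conjugation σ, and let 𝔮 be a complex Lie subalgebra of 𝔤. Let J be a ℂ-linear derivation of 𝔤 with σ∘J = J∘σ, J(𝔮) ⊆ 𝔮, and Z − i·J(Z) ∈ 𝔮 ∩ σ(𝔮) for every Z ∈ 𝔮. Suppose J = S + N where S and N are ℂ-linear endomorphisms of 𝔤 with S∘N = N∘S, S semisimple (diagonalizable) and N nilpotent (the Jordan–Chevalley decomposition of J). Then S is again a derivation of 𝔤 and satisfies σ∘S = S∘σ, S(𝔮) ⊆ 𝔮, and Z − i·S(Z) ∈ 𝔮 ∩ σ(𝔮) for every Z ∈ 𝔮. -/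

import Mathlib

open Module Polynomial

section Aux

variable {g : Type*} [LieRing g] [LieAlgebra ℂ g]

/-- Invariance of a submodule under the unital algebra generated by `J`. -/
lemma aux_adjoin_invariant (J : Module.End ℂ g) (p : Submodule ℂ g)
    (hp : ∀ x ∈ p, J x ∈ p) {a : Module.End ℂ g} (ha : a ∈ Algebra.adjoin ℂ {J}) :
    ∀ x ∈ p, a x ∈ p := by
  induction ha using Algebra.adjoin_induction with
  | mem b hb => simpa [Set.mem_singleton_iff.mp hb] using hp
  | algebraMap r => intro x hx; simpa [Module.algebraMap_end_apply] using p.smul_mem r hx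
  | add b c hb hc ihb ihc => intro x hx; exact p.add_mem (ihb x hx) (ihc x hx)
  | mul b c hb hc ihb ihc => intro x hx; exact ihb _ (ihc x hx)

lemma aux_adjoin_commute (J : Module.End ℂ g) {b : Module.End ℂ g} (hb : Commute b J)
    {a : Module.End ℂ g} (ha : a ∈ Algebra.adjoin ℂ {J}) : Commute b a := by
  induction ha using Algebra.adjoin_induction with
  | mem c hc => rwa [Set.mem_singleton_iff.mp hc]
  | algebraMap r => exact Algebra.commute_algebraMap_right r b
  | add c d hc hd ihc ihd => exact ihc.add_right ihd
  | mul c d hc hd ihc ihd => exact ihc.mul_right ihd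

/-- Leibniz-type vanishing lemma for a derivation. -/
lemma aux_leib (J : Module.End ℂ g)
    (hJder : ∀ x y : g, J ⁅x, y⁆ = ⁅J x, y⁆ + ⁅x, J y⁆) (lam mu : ℂ) :
    ∀ (n a b : ℕ) (x y : g), a + b = n →
      ((J - lam • 1) ^ a) x = 0 → ((J - mu • 1) ^ b) y = 0 →
      ((J - (lam + mu) • 1) ^ n) ⁅x, y⁆ = 0 := by
  intro n
  induction n with
  | zero =>
    intro a b x y hab hx hy
    have ha : a = 0 := by omega
    subst ha
    have : x = 0 := by simpa using hx
    simp [this]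
  | succ n ih =>
    intro a b x y hab hx hy
    rcases a with _ | a
    · have : x = 0 := by simpa using hx
      simp [this]
    rcases b with _ | b
    · have : y = 0 := by simpa using hy
      simp [this]
    have key : (J - (lam + mu) • 1) ⁅x, y⁆ = ⁅(J - lam • 1) x, y⁆ + ⁅x, (J - mu • 1) y⁆ := by
      simp only [LinearMap.sub_apply, LinearMap.smul_apply, Module.End.one_apply,
        sub_lie, lie_sub, smul_lie, lie_smul]
      rw [hJder]
      module
    have h1 : ((J - lam • 1) ^ a) ((J - lam • 1) x) = 0 := by
      rw [← Module.End.mul_apply, ← pow_succ]; exact hx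
    have h2 : ((J - mu • 1) ^ b) ((J - mu • 1) y) = 0 := by
      rw [← Module.End.mul_apply, ← pow_succ]; exact hy
    have e1 := ih a (b + 1) ((J - lam • 1) x) y (by omega) h1 hy
    have e2 := ih (a + 1) b x ((J - mu • 1) y) (by omega) hx h2
    rw [pow_succ, Module.End.mul_apply, key, map_add, e1, e2, add_zero]

end Aux

/-- If `J ∈ Der(𝔤)` satisfies the J-property (condition (1.14)') of a CR algebra
`(𝔤₀, 𝔮)` (where `𝔤₀` is the real form fixed by the conjugation `σ`), then so does
the semisimple part `S` of the Jordan–Chevalley decomposition `J = S + N`. -/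
theorem stmt_1 {g : Type*} [LieRing g] [LieAlgebra ℂ g] [FiniteDimensional ℂ g]
    (σ : g → g)
    (hσadd : ∀ x y, σ (x + y) = σ x + σ y)
    (hσsmul : ∀ (z : ℂ) (x : g), σ (z • x) = (starRingEnd ℂ z) • σ x)
    (hσbracket : ∀ x y, σ ⁅x, y⁆ = ⁅σ x, σ y⁆)
    (hσinv : ∀ x, σ (σ x) = x)
    (q : LieSubalgebra ℂ g)
    (J S N : Module.End ℂ g)
    (hJder : ∀ x y, J ⁅x, y⁆ = ⁅J x, y⁆ + ⁅x, J y⁆)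
    (hJσ : ∀ x, σ (J x) = J (σ x))
    (hJq : ∀ Z ∈ q, J Z ∈ q)
    (hJcr : ∀ Z ∈ q, Z - Complex.I • J Z ∈ q ∧ σ (Z - Complex.I • J Z) ∈ q)
    (hJSN : J = S + N)
    (hcomm : S ∘ₗ N = N ∘ₗ S)
    (hS : S.IsSemisimple)
    (hN : IsNilpotent N) :
    (∀ x y, S ⁅x, y⁆ = ⁅S x, y⁆ + ⁅x, S y⁆) ∧
    (∀ x, σ (S x) = S (σ x)) ∧
    (∀ Z ∈ q, S Z ∈ q) ∧
    (∀ Z ∈ q, Z - Complex.I • S Z ∈ q ∧ σ (Z - Complex.I • S Z) ∈ q) := by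
  have hSN : Commute S N := by
    rw [Commute, SemiconjBy, Module.End.mul_eq_comp, Module.End.mul_eq_comp]
    exact hcomm
  have hJS : Commute J S := by
    rw [hJSN]; exact (Commute.refl S).add_left hSN.symm
  have hJN : Commute J N := by
    rw [hJSN]; exact hSN.add_left (Commute.refl N)
  -- σ of zero
  have hσ0 : σ 0 = 0 := by
    have := hσsmul 0 0
    simpa using this
  -- Jordan-Chevalley uniqueness : S is a polynomial in J
  obtain ⟨N₀, hN₀mem, S₀, hS₀mem, hN₀nil, hS₀ss, hJ₀⟩ :=
    Module.End.exists_isNilpotent_isSemisimple (f := J)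
  have hSS₀comm : Commute S S₀ := aux_adjoin_commute J hJS.symm hS₀mem
  have hSN₀comm : Commute S N₀ := aux_adjoin_commute J hJS.symm hN₀mem
  have hNS₀comm : Commute N S₀ := aux_adjoin_commute J hJN.symm hS₀mem
  have hNN₀comm : Commute N N₀ := aux_adjoin_commute J hJN.symm hN₀mem
  have hdiff : S - S₀ = N₀ - N := by
    have h1 : S + N = N₀ + S₀ := by rw [← hJSN, hJ₀]
    linear_combination (norm := module) h1
  have hSeq : S = S₀ := by
    have hss : (S - S₀).IsSemisimple := hS.sub_of_commute hSS₀comm hS₀ss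
    have hnil : IsNilpotent (S - S₀) := by
      rw [hdiff]
      exact Commute.isNilpotent_sub hNN₀comm.symm hN₀nil hN
    have := Module.End.eq_zero_of_isNilpotent_isSemisimple hnil hss
    linear_combination (norm := module) this
  have hSadj : S ∈ Algebra.adjoin ℂ {J} := hSeq ▸ hS₀mem
  -- the submodule σ⁻¹ q and h = q ⊓ σ⁻¹ q
  let σq : Submodule ℂ g :=
    { carrier := {x | σ x ∈ q}
      add_mem' := fun {a b} ha hb => by
        simp only [Set.mem_setOf_eq, hσadd] at *
        exact q.add_mem ha hb
      zero_mem' := by simp only [Set.mem_setOf_eq, hσ0]; exact q.zero_mem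
      smul_mem' := fun c x hx => by
        simp only [Set.mem_setOf_eq, hσsmul] at *
        exact q.smul_mem _ hx }
  let h : Submodule ℂ g := q.toSubmodule ⊓ σq
  have hmem : ∀ x : g, x ∈ h ↔ (x ∈ q ∧ σ x ∈ q) := fun x => Iff.rfl
  have hJh : ∀ x ∈ h, J x ∈ h := by
    intro x hx
    rcases (hmem x).mp hx with ⟨h1, h2⟩
    refine (hmem _).mpr ⟨hJq x h1, ?_⟩
    rw [hJσ]
    exact hJq _ h2
  have hSq : ∀ Z ∈ q, S Z ∈ q := by
    intro Z hZ
    exact aux_adjoin_invariant J q.toSubmodule hJq hSadj Z hZ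
  have hSh : ∀ x ∈ h, S x ∈ h := fun x hx =>
    aux_adjoin_invariant J h hJh hSadj x hx
  have hNq : ∀ Z ∈ q, N Z ∈ q := by
    intro Z hZ
    have : N = J - S := by rw [hJSN]; abel
    rw [this]
    exact q.sub_mem (hJq Z hZ) (hSq Z hZ)
  have hNh : ∀ x ∈ h, N x ∈ h := by
    intro x hx
    have : N = J - S := by rw [hJSN]; abel
    rw [this]
    exact h.sub_mem (hJh x hx) (hSh x hx)
  have hcr : ∀ Z ∈ q, Z - Complex.I • J Z ∈ h := fun Z hZ => (hmem _).mpr (hJcr Z hZ)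
  -- scalar action of S on generalized eigenspaces of J
  have key2 : ∀ μ : ℂ, ∀ x ∈ J.maxGenEigenspace μ, S x = μ • x := by
    intro μ
    set p := J.maxGenEigenspace μ with hp
    have hSp : Set.MapsTo S p p := Module.End.mapsTo_maxGenEigenspace_of_comm hJS μ
    have hNp : Set.MapsTo N p p := Module.End.mapsTo_maxGenEigenspace_of_comm hJN μ
    have hAco : Commute J (J - algebraMap ℂ (Module.End ℂ g) μ) :=
      (Commute.refl J).sub_right (Algebra.commute_algebraMap_right μ J)
    have hAp : Set.MapsTo (J - algebraMap ℂ (Module.End ℂ g) μ) p p :=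
      Module.End.mapsTo_maxGenEigenspace_of_comm hAco μ
    have hSp' : ∀ x ∈ p, S x ∈ p := fun x hx => hSp hx
    have hNp' : ∀ x ∈ p, N x ∈ p := fun x hx => hNp hx
    have hAp' : ∀ x ∈ p, (J - algebraMap ℂ (Module.End ℂ g) μ) x ∈ p := fun x hx => hAp hx
    have hAnil : IsNilpotent ((J - algebraMap ℂ (Module.End ℂ g) μ).restrict hAp') :=
      Module.End.isNilpotent_restrict_maxGenEigenspace_sub_algebraMap J μ hAp'
    have hNnil : IsNilpotent (N.restrict hNp') := by
      obtain ⟨K, hK⟩ := hN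
      exact ⟨K, by
        rw [Module.End.pow_restrict K hNp']
        ext ⟨x, hx⟩
        simp [hK]⟩
    have hSrs : Module.End.IsSemisimple (S.restrict hSp') := hS.restrict (fun x hx => hSp' x hx)
    have hdiff2 : S.restrict hSp' - algebraMap ℂ (Module.End ℂ p) μ =
        (J - algebraMap ℂ (Module.End ℂ g) μ).restrict hAp' - N.restrict hNp' := by
      ext ⟨x, hx⟩
      have : J x = S x + N x := by rw [hJSN]; simp
      simp only [LinearMap.sub_apply, LinearMap.restrict_coe_apply, Module.algebraMap_end_apply,
        AddSubgroupClass.coe_sub, SetLike.val_smul, this]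
      abel
    have hcommr : Commute ((J - algebraMap ℂ (Module.End ℂ g) μ).restrict hAp')
        (N.restrict hNp') := by
      have hc : Commute (J - algebraMap ℂ (Module.End ℂ g) μ) N :=
        hJN.sub_left (Algebra.commute_algebraMap_left μ N)
      ext ⟨x, hx⟩
      have := LinearMap.congr_fun hc x
      simp only [Module.End.mul_apply, LinearMap.restrict_coe_apply] at *
      exact this
    have hnil2 : IsNilpotent (S.restrict hSp' - algebraMap ℂ (Module.End ℂ p) μ) := by
      rw [hdiff2]
      exact Commute.isNilpotent_sub hcommr hAnil hNnil
    have hss2 : Module.End.IsSemisimple (S.restrict hSp' - algebraMap ℂ (Module.End ℂ p) μ) :=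
      (Module.End.isSemisimple_sub_algebraMap_iff).mpr hSrs
    have h0 := Module.End.eq_zero_of_isNilpotent_isSemisimple hnil2 hss2
    intro x hx
    have h0x : ((S.restrict hSp' - algebraMap ℂ (Module.End ℂ p) μ) ⟨x, hx⟩ : p) = 0 := by
      rw [h0]; rfl
    have hval := congrArg Subtype.val h0x
    simp only [LinearMap.sub_apply, Module.algebraMap_end_apply, AddSubgroupClass.coe_sub,
      SetLike.val_smul, LinearMap.restrict_coe_apply, ZeroMemClass.coe_zero] at hval
    exact sub_eq_zero.mp hval
  -- σ maps eigenspaces to conjugate eigenspaces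
  have key3 : ∀ (μ : ℂ) (x : g), x ∈ J.maxGenEigenspace μ →
      σ x ∈ J.maxGenEigenspace (starRingEnd ℂ μ) := by
    intro μ x hx
    rw [Module.End.mem_maxGenEigenspace] at hx ⊢
    obtain ⟨k, hk⟩ := hx
    refine ⟨k, ?_⟩
    have step : ∀ w : g, (J - (starRingEnd ℂ μ) • 1) (σ w) = σ ((J - μ • 1) w) := by
      intro w
      have e1 : (J - μ • 1) w = J w + (-μ) • w := by
        simp only [LinearMap.sub_apply, LinearMap.smul_apply, Module.End.one_apply, neg_smul,
          sub_eq_add_neg, LinearMap.add_apply, LinearMap.neg_apply]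
      rw [e1, hσadd, hσsmul, hJσ]
      simp only [LinearMap.sub_apply, LinearMap.smul_apply, Module.End.one_apply, map_neg,
        neg_smul, sub_eq_add_neg, LinearMap.add_apply, LinearMap.neg_apply]
    have main : ∀ (m : ℕ) (z : g),
        ((J - (starRingEnd ℂ μ) • 1) ^ m) (σ z) = σ (((J - μ • 1) ^ m) z) := by
      intro m
      induction m with
      | zero => simp
      | succ m ih =>
        intro z
        rw [pow_succ, Module.End.mul_apply, step z, ih ((J - μ • 1) z),
          ← Module.End.mul_apply, ← pow_succ]
    rw [main k x, hk, hσ0]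
  -- top decomposition
  have htop : ∀ x : g, x ∈ ⨆ μ : ℂ, J.maxGenEigenspace μ := by
    intro x
    rw [Module.End.iSup_maxGenEigenspace_eq_top J]
    trivial
  -- derivation property of S
  have hSder : ∀ x y : g, S ⁅x, y⁆ = ⁅S x, y⁆ + ⁅x, S y⁆ := by
    have H : ∀ (μ : ℂ) (x : g), x ∈ J.maxGenEigenspace μ →
        ∀ y : g, S ⁅x, y⁆ = ⁅S x, y⁆ + ⁅x, S y⁆ := by
      intro μ x hx y
      refine Submodule.iSup_induction (motive := fun y => S ⁅x, y⁆ = ⁅S x, y⁆ + ⁅x, S y⁆)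
        (fun ν : ℂ => J.maxGenEigenspace ν) (htop y) ?_ (by simp) ?_
      · intro ν y hy
        have hxy : ⁅x, y⁆ ∈ J.maxGenEigenspace (μ + ν) := by
          rw [Module.End.mem_maxGenEigenspace]
          rw [Module.End.mem_maxGenEigenspace] at hx hy
          obtain ⟨a, ha⟩ := hx
          obtain ⟨b, hb⟩ := hy
          exact ⟨a + b, aux_leib J hJder μ ν (a + b) a b x y rfl ha hb⟩
        rw [key2 _ _ hxy, key2 _ _ hx, key2 _ _ hy, smul_lie, lie_smul, add_smul]
      · intro y₁ y₂ h1 h2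
        simp only [lie_add, map_add, h1, h2]
        abel
    intro x y
    refine Submodule.iSup_induction (motive := fun x => S ⁅x, y⁆ = ⁅S x, y⁆ + ⁅x, S y⁆)
      (fun μ : ℂ => J.maxGenEigenspace μ) (htop x) (fun μ x hx => H μ x hx y) (by simp) ?_
    intro x₁ x₂ h1 h2
    simp only [add_lie, map_add, h1, h2]
    abel
  -- σ commutes with S
  have hSσ : ∀ x : g, σ (S x) = S (σ x) := by
    intro x
    refine Submodule.iSup_induction (motive := fun x => σ (S x) = S (σ x))
      (fun μ : ℂ => J.maxGenEigenspace μ) (htop x) ?_ (by simp [hσ0]) ?_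
    · intro μ x hx
      rw [key2 μ x hx, hσsmul, key2 _ _ (key3 μ x hx)]
    · intro x₁ x₂ h1 h2
      rw [map_add, hσadd, h1, h2, hσadd, map_add]
  -- CR condition
  have hScr : ∀ Z ∈ q, Z - Complex.I • S Z ∈ h := by
    -- S = aeval J P for some polynomial P
    have hmemr : S ∈ Subalgebra.toSubmodule (Algebra.adjoin ℂ ({J} : Set (Module.End ℂ g))) :=
      hSadj
    rw [Algebra.adjoin_singleton_eq_range_aeval ℂ J] at hmemr
    obtain ⟨P, hP⟩ := hmemr
    -- powers of J act as powers of -I modulo h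
    have hpow : ∀ (n : ℕ), ∀ Z ∈ q, (J ^ n) Z - ((-Complex.I) ^ n) • Z ∈ h := by
      intro n
      induction n with
      | zero => intro Z hZ; simp
      | succ n ih =>
        intro Z hZ
        have hw : (J ^ n) Z - ((-Complex.I) ^ n) • Z ∈ h := ih Z hZ
        have hJw : J ((J ^ n) Z - ((-Complex.I) ^ n) • Z) ∈ h := hJh _ hw
        have hbase : J Z - (-Complex.I) • Z ∈ h := by
          have h1 := hcr Z hZ
          have := h.smul_mem Complex.I h1
          have heq : Complex.I • (Z - Complex.I • J Z) = J Z - (-Complex.I) • Z := by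
            rw [smul_sub, smul_smul, Complex.I_mul_I]
            module
          rwa [heq] at this
        have heq2 : (J ^ (n + 1)) Z - ((-Complex.I) ^ (n + 1)) • Z =
            J ((J ^ n) Z - ((-Complex.I) ^ n) • Z) +
              ((-Complex.I) ^ n) • (J Z - (-Complex.I) • Z) := by
          rw [pow_succ' J, pow_succ' (-Complex.I), Module.End.mul_apply, map_sub, map_smul]
          module
        rw [heq2]
        exact h.add_mem hJw (h.smul_mem _ hbase)
    -- S acts as P.eval (-I) modulo h
    have hSmod : ∀ Z ∈ q, S Z - (P.eval (-Complex.I)) • Z ∈ h := by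
      intro Z hZ
      have hP' : Polynomial.aeval J P = S := hP
      have hv : S Z = ∑ i ∈ Finset.range (P.natDegree + 1), P.coeff i • (J ^ i) Z := by
        rw [← hP', Polynomial.aeval_eq_sum_range]
        simp [LinearMap.sum_apply]
      have he : P.eval (-Complex.I) • Z =
          ∑ i ∈ Finset.range (P.natDegree + 1), P.coeff i • ((-Complex.I) ^ i) • Z := by
        rw [Polynomial.eval_eq_sum_range, Finset.sum_smul]
        simp [smul_smul]
      rw [hv, he, ← Finset.sum_sub_distrib]
      refine h.sum_mem fun i _ => ?_
      have := h.smul_mem (P.coeff i) (hpow i Z hZ)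
      rwa [smul_sub] at this
    -- N acts as c := -I - P.eval(-I) modulo h
    set c : ℂ := -Complex.I - P.eval (-Complex.I) with hc
    have hNmod : ∀ Z ∈ q, N Z - c • Z ∈ h := by
      intro Z hZ
      have h1 := hpow 1 Z hZ
      simp only [pow_one] at h1
      have h2 := hSmod Z hZ
      have heq : N Z - c • Z = (J Z - (-Complex.I) • Z) - (S Z - P.eval (-Complex.I) • Z) := by
        have : N Z = J Z - S Z := by rw [hJSN]; simp
        rw [this, hc, sub_smul]
        abel
      rw [heq]
      exact h.sub_mem h1 h2
    have hNpowmod : ∀ (k : ℕ), ∀ Z ∈ q, (N ^ k) Z - (c ^ k) • Z ∈ h := by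
      intro k
      induction k with
      | zero => intro Z hZ; simp
      | succ k ih =>
        intro Z hZ
        have hw := ih Z hZ
        have hNw := hNh _ hw
        have hbase := hNmod Z hZ
        have heq : (N ^ (k + 1)) Z - (c ^ (k + 1)) • Z =
            N ((N ^ k) Z - (c ^ k) • Z) + (c ^ k) • (N Z - c • Z) := by
          rw [pow_succ' N, pow_succ' c, Module.End.mul_apply, map_sub, map_smul]
          module
        rw [heq]
        exact h.add_mem hNw (h.smul_mem _ hbase)
    intro Z hZ
    by_cases hc0 : c = 0
    · -- P.eval (-I) = -I, so S Z + I • Z ∈ h hence Z - I • S Z ∈ h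
      have hev : P.eval (-Complex.I) = -Complex.I := by
        have := hc0
        rw [hc, sub_eq_zero] at this
        exact this.symm
      have h2 := hSmod Z hZ
      rw [hev] at h2
      have := h.smul_mem (-Complex.I) h2
      have heq : (-Complex.I) • (S Z - (-Complex.I) • Z) = Z - Complex.I • S Z := by
        rw [smul_sub, smul_smul]
        have h11 : -Complex.I * -Complex.I = -1 := by
          rw [neg_mul_neg, Complex.I_mul_I]
        rw [h11]
        module
      rwa [heq] at this
    · -- q ⊆ h
      obtain ⟨K, hK⟩ := hN
      have hZh : Z ∈ h := by
        have := hNpowmod K Z hZ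
        rw [hK] at this
        simp only [LinearMap.zero_apply, zero_sub] at this
        have h2 := h.neg_mem this
        rw [neg_neg] at h2
        have := h.smul_mem ((c ^ K)⁻¹) h2
        rwa [smul_smul, inv_mul_cancel₀ (pow_ne_zero K hc0), one_smul] at this
      exact h.sub_mem hZh (h.smul_mem _ (hSh _ hZh))
  exact ⟨hSder, hSσ, hSq, fun Z hZ => (hmem _).mp (hScr Z hZ)⟩
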